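/- Let H ∈ (0, 1/2) and let (W¹_t)_{t∈[0,1]} and (W²_t)_{t∈[0,1]} be two independent fractional Brownian motions with Hurst parameter H, each with continuous sample paths, on a common probability space. For 0 ≤ s < t ≤ 1 define the real random variable Y_{s,t} = ( (t−s)^{−2} ∫_s^t [ (u−s)(W¹_t − W¹_u) − (t−u)(W¹_u − W¹_s) ] du ) · (W²_t − W²_s). Then for all 0 ≤ s' < t' ≤ s < t ≤ 1: |E( Y_{s',t'} · Y_{s,t} )| ≤ ρ_H(s',t';s,t)², where ρ_H(a,b;c,d) = (1/2)(|d−a|^{2H} + |c−b|^{2H} − |c−a|^{2H} − |d−b|^{2H}). -/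

import Mathlib

open Set MeasureTheory ProbabilityTheory

/-- Covariance of fractional Brownian increments with Hurst parameter `H`:
`ρ_H(a,b;c,d) = (1/2)(|d−a|^{2H} + |c−b|^{2H} − |c−a|^{2H} − |d−b|^{2H})`. -/
noncomputable def fbmCov (H a b c d : ℝ) : ℝ :=
  (|d - a| ^ (2 * H) + |c - b| ^ (2 * H) - |c - a| ^ (2 * H) - |d - b| ^ (2 * H)) / 2

/-- A (one-dimensional) fractional Brownian motion with Hurst parameter `H` on `[0,1]`:
a measurable process such that every finite linear combination `Σ aᵢ W_{tᵢ}` is a centered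
Gaussian random variable, with covariance
`E(W_s W_t) = (1/2)(s^{2H} + t^{2H} − |t−s|^{2H})`. -/
def IsFBM {Ω : Type*} [MeasurableSpace Ω] (P : Measure Ω) (H : ℝ) (W : ℝ → Ω → ℝ) : Prop :=
  (∀ t ∈ Icc (0 : ℝ) 1, Measurable (W t)) ∧
  (∀ (n : ℕ) (a : Fin n → ℝ) (ts : Fin n → ℝ), (∀ i, ts i ∈ Icc (0 : ℝ) 1) →
    ∃ v : NNReal, Measure.map (fun ω => ∑ i, a i * W (ts i) ω) P = gaussianReal 0 v) ∧
  (∀ s ∈ Icc (0 : ℝ) 1, ∀ t ∈ Icc (0 : ℝ) 1,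
    ∫ ω, W s ω * W t ω ∂P = (s ^ (2 * H) + t ^ (2 * H) - |t - s| ^ (2 * H)) / 2)

/-- The random variable
`Y_{s,t} = ((t−s)^{−2} ∫_s^t [(u−s)(W¹_t − W¹_u) − (t−u)(W¹_u − W¹_s)] du)·(W²_t − W²_s)`. -/
noncomputable def Yproc {Ω : Type*} (W1 W2 : ℝ → Ω → ℝ) (s t : ℝ) (ω : Ω) : ℝ :=
  ((t - s) ^ 2)⁻¹ *
    (∫ u in s..t, ((u - s) * (W1 t ω - W1 u ω) - (t - u) * (W1 u ω - W1 s ω))) *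
    (W2 t ω - W2 s ω)

/-! ### Deterministic lemmas about `fbmCov` -/

private lemma rpow_submodular {h x α β : ℝ} (h0 : 0 < h) (h1 : h ≤ 1)
    (hx : 0 ≤ x) (hα : 0 ≤ α) (hβ : 0 ≤ β) :
    (x + α + β) ^ h + x ^ h ≤ (x + α) ^ h + (x + β) ^ h := by
  have hc : Continuous fun y : ℝ => y ^ h := by
    rw [continuous_iff_continuousAt]
    intro y
    exact Real.continuousAt_rpow_const y h (Or.inr h0.le)
  set θ : ℝ → ℝ := fun y => (y + β) ^ h - y ^ h with hθ
  have hanti : AntitoneOn θ (Ici (0:ℝ)) := by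
    apply antitoneOn_of_deriv_nonpos (convex_Ici 0)
    · exact ((hc.comp (continuous_id.add continuous_const)).sub hc).continuousOn
    · intro y hy
      rw [interior_Ici] at hy
      have hy' : (0:ℝ) < y := hy
      have d1 : HasDerivAt (fun y : ℝ => (y + β) ^ h) (h * (y + β) ^ (h - 1) * 1) y := by
        have := Real.hasDerivAt_rpow_const (x := y + β) (p := h)
          (Or.inl (by positivity))
        exact this.comp y ((hasDerivAt_id y).add_const β)
      have d2 : HasDerivAt (fun y : ℝ => y ^ h) (h * y ^ (h - 1)) y :=
        Real.hasDerivAt_rpow_const (Or.inl hy'.ne')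
      exact ((d1.sub d2).differentiableAt).differentiableWithinAt
    · intro y hy
      rw [interior_Ici] at hy
      have hy' : (0:ℝ) < y := hy
      have d1 : HasDerivAt (fun y : ℝ => (y + β) ^ h) (h * (y + β) ^ (h - 1) * 1) y := by
        have := Real.hasDerivAt_rpow_const (x := y + β) (p := h)
          (Or.inl (by positivity))
        exact this.comp y ((hasDerivAt_id y).add_const β)
      have d2 : HasDerivAt (fun y : ℝ => y ^ h) (h * y ^ (h - 1)) y :=
        Real.hasDerivAt_rpow_const (Or.inl hy'.ne')
      rw [(show HasDerivAt θ _ y from d1.sub d2).deriv]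
      have : (y + β) ^ (h - 1) ≤ y ^ (h - 1) :=
        Real.rpow_le_rpow_of_nonpos hy' (by linarith) (by linarith)
      nlinarith
  have key : θ (x + α) ≤ θ x := hanti (by simp [hx]) (by simp; linarith) (by linarith)
  simp only [hθ] at key
  have e : x + α + β = x + β + α := by ring
  linarith [key]

private lemma fbmCov_nonpos {H : ℝ} (h0 : 0 < H) (h1 : 2 * H ≤ 1) {a b c d : ℝ}
    (hab : a ≤ b) (hbc : b ≤ c) (hcd : c ≤ d) : fbmCov H a b c d ≤ 0 := by
  have e1 : |d - a| = (c - b) + (b - a) + (d - c) := by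
    rw [abs_of_nonneg (by linarith)]; ring
  have e2 : |c - b| = c - b := abs_of_nonneg (by linarith)
  have e3 : |c - a| = (c - b) + (b - a) := by rw [abs_of_nonneg (by linarith)]; ring
  have e4 : |d - b| = (c - b) + (d - c) := by rw [abs_of_nonneg (by linarith)]; ring
  have key := rpow_submodular (h := 2 * H) (x := c - b) (α := b - a) (β := d - c)
    (by linarith) h1 (by linarith) (by linarith) (by linarith)
  rw [fbmCov, e1, e2, e3, e4]
  linarith

private lemma fbmCov_add_left (H a x b c d : ℝ) :
    fbmCov H a b c d = fbmCov H a x c d + fbmCov H x b c d := by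
  rw [fbmCov, fbmCov, fbmCov]; ring

private lemma fbmCov_add_right (H a b c y d : ℝ) :
    fbmCov H a b c d = fbmCov H a b c y + fbmCov H a b y d := by
  rw [fbmCov, fbmCov, fbmCov]; ring

private lemma fbmCov_abs_le {H : ℝ} (h0 : 0 < H) (h1 : 2 * H ≤ 1)
    {s' a b t' s c d t : ℝ} (o1 : s' ≤ a) (o2 : a ≤ b) (o3 : b ≤ t') (o4 : t' ≤ s)
    (o5 : s ≤ c) (o6 : c ≤ d) (o7 : d ≤ t) :
    |fbmCov H a b c d| ≤ -fbmCov H s' t' s t := by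
  have n1 : fbmCov H s' a s t ≤ 0 := fbmCov_nonpos h0 h1 o1 (by linarith) (by linarith)
  have n2 : fbmCov H b t' s t ≤ 0 := fbmCov_nonpos h0 h1 o3 o4 (by linarith)
  have n3 : fbmCov H a b s c ≤ 0 := fbmCov_nonpos h0 h1 o2 (by linarith) o5
  have n4 : fbmCov H a b d t ≤ 0 := fbmCov_nonpos h0 h1 o2 (by linarith) o7
  have n5 : fbmCov H a b c d ≤ 0 := fbmCov_nonpos h0 h1 o2 (by linarith) o6
  have e1 : fbmCov H s' t' s t
      = fbmCov H s' a s t + (fbmCov H a b s t + fbmCov H b t' s t) := by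
    rw [← fbmCov_add_left H a b t' s t, ← fbmCov_add_left H s' a t' s t]
  have e2 : fbmCov H a b s t
      = fbmCov H a b s c + (fbmCov H a b c d + fbmCov H a b d t) := by
    rw [← fbmCov_add_right H a b c d t, ← fbmCov_add_right H a b s c t]
  rw [abs_le]
  constructor <;> linarith

private lemma fbmCov_abs_le_two {H : ℝ} (h0 : 0 < H) {a b c d : ℝ}
    (ha : a ∈ Icc (0:ℝ) 1) (hb : b ∈ Icc (0:ℝ) 1) (hc : c ∈ Icc (0:ℝ) 1)
    (hd : d ∈ Icc (0:ℝ) 1) : |fbmCov H a b c d| ≤ 2 := by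
  have key : ∀ x y : ℝ, x ∈ Icc (0:ℝ) 1 → y ∈ Icc (0:ℝ) 1 →
      |x - y| ^ (2 * H) ∈ Icc (0:ℝ) 1 := by
    intro x y hx hy
    constructor
    · exact Real.rpow_nonneg (abs_nonneg _) _
    · exact Real.rpow_le_one (abs_nonneg _)
        (abs_le.mpr ⟨by linarith [hx.1, hx.2, hy.1, hy.2], by linarith [hx.1, hx.2, hy.1, hy.2]⟩)
        (by positivity)
  have k1 := key d a hd ha
  have k2 := key c b hc hb
  have k3 := key c a hc ha
  have k4 := key d b hd hb
  rw [fbmCov, abs_le]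
  constructor <;> linarith [k1.1, k1.2, k2.1, k2.2, k3.1, k3.2, k4.1, k4.2]

/-! ### Gaussian moment lemmas -/

private lemma gauss_memL2 (v : NNReal) : MemLp (id : ℝ → ℝ) 2 (gaussianReal 0 v) := by
  rw [memLp_two_iff_integrable_sq aestronglyMeasurable_id]
  by_cases hv : v = 0
  · subst hv
    rw [gaussianReal_zero_var]
    have he : (fun _ : ℝ => ((0:ℝ)) ^ 2) =ᵐ[Measure.dirac (0:ℝ)] fun x => (id x) ^ 2 := by
      rw [Filter.EventuallyEq, ae_dirac_iff]
      · simp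
      · exact measurableSet_eq_fun measurable_const ((measurable_id.pow_const 2))
    exact (integrable_const _).congr he
  · rw [gaussianReal_of_var_ne_zero _ hv,
      integrable_withDensity_iff (measurable_gaussianPDF _ _)
        (Filter.Eventually.of_forall fun x => ENNReal.ofReal_lt_top)]
    have hvpos : (0:ℝ) < (v:ℝ) := by positivity
    set b : ℝ := ((2:ℝ) * v)⁻¹ with hb
    have hbpos : 0 < b := by positivity
    have heq : ∀ x : ℝ, (id x) ^ 2 * (gaussianPDF 0 v x).toReal
        = (Real.sqrt (2 * Real.pi * v))⁻¹ * (x ^ 2 * Real.exp (-b * x ^ 2)) := by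
      intro x
      rw [gaussianPDF, ENNReal.toReal_ofReal (gaussianPDFReal_nonneg _ _ _), gaussianPDFReal]
      have : -(x - 0) ^ 2 / (2 * (v:ℝ)) = -b * x ^ 2 := by
        rw [hb]; field_simp; ring
      rw [this]; simp only [id]; ring
    have key : Integrable (fun x : ℝ => x ^ 2 * Real.exp (-b * x ^ 2)) volume := by
      have hint : Integrable (fun x : ℝ => (2 / b) * Real.exp (-(b/2) * x ^ 2)) volume :=
        (integrable_exp_neg_mul_sq (by positivity)).const_mul _
      apply hint.mono' ((measurable_id.pow_const 2).mul
        (Real.measurable_exp.comp ((measurable_id.pow_const 2).const_mul (-b)))).aestronglyMeasurable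
      refine Filter.Eventually.of_forall fun x => ?_
      have h1 : (b/2) * x ^ 2 ≤ Real.exp ((b/2) * x ^ 2) := by
        have := Real.add_one_le_exp ((b/2) * x ^ 2)
        nlinarith [sq_nonneg x]
      have hexp : (0:ℝ) < Real.exp ((b/2) * x ^ 2) := Real.exp_pos _
      have h2 : x ^ 2 * Real.exp (-(b/2) * x ^ 2) ≤ 2 / b := by
        have hx2 : x ^ 2 ≤ (2 / b) * Real.exp ((b/2) * x ^ 2) := by
          rw [div_mul_eq_mul_div, le_div_iff₀ hbpos]
          nlinarith
        have hen : Real.exp (-(b/2) * x ^ 2) = (Real.exp ((b/2) * x ^ 2))⁻¹ := by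
          rw [← Real.exp_neg]; ring_nf
        rw [hen]
        calc x ^ 2 * (Real.exp ((b/2) * x ^ 2))⁻¹
            ≤ ((2 / b) * Real.exp ((b/2) * x ^ 2)) * (Real.exp ((b/2) * x ^ 2))⁻¹ :=
              mul_le_mul_of_nonneg_right hx2 (by positivity)
          _ = 2 / b := by field_simp
      have h3 : Real.exp (-b * x ^ 2)
          = Real.exp (-(b/2) * x ^ 2) * Real.exp (-(b/2) * x ^ 2) := by
        rw [← Real.exp_add]; ring_nf
      simp only [Function.comp, id, Pi.mul_apply]
      rw [Real.norm_eq_abs, abs_of_nonneg (by positivity), h3]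
      calc x ^ 2 * (Real.exp (-(b/2) * x ^ 2) * Real.exp (-(b/2) * x ^ 2))
          = (x ^ 2 * Real.exp (-(b/2) * x ^ 2)) * Real.exp (-(b/2) * x ^ 2) := by ring
        _ ≤ (2 / b) * Real.exp (-(b/2) * x ^ 2) :=
            mul_le_mul_of_nonneg_right h2 (Real.exp_pos _).le
    simp only [heq]
    exact key.const_mul _

private lemma memL2_of_gaussian {Ω : Type*} [MeasurableSpace Ω] {P : Measure Ω}
    {X : Ω → ℝ} (hX : Measurable X) {v : NNReal}
    (h : Measure.map X P = gaussianReal 0 v) : MemLp X 2 P := by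
  have h2 : MemLp (id : ℝ → ℝ) 2 (Measure.map X P) := by rw [h]; exact gauss_memL2 v
  have := (memLp_map_measure_iff aestronglyMeasurable_id hX.aemeasurable).mp h2
  simpa [Function.comp] using this

private lemma memL2_mul_integrable {Ω : Type*} [MeasurableSpace Ω] {P : Measure Ω}
    {f g : Ω → ℝ} (hf : MemLp f 2 P) (hg : MemLp g 2 P) :
    Integrable (fun ω => f ω * g ω) P := by
  have hi : Integrable (fun ω => (f ω ^ 2 + g ω ^ 2) / 2) P :=
    (hf.integrable_sq.add hg.integrable_sq).div_const 2
  refine hi.mono' (hf.aestronglyMeasurable.mul hg.aestronglyMeasurable)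
    (Filter.Eventually.of_forall fun ω => ?_)
  rw [Real.norm_eq_abs, abs_mul]
  nlinarith [sq_nonneg (|f ω| - |g ω|), sq_abs (f ω), sq_abs (g ω),
    abs_nonneg (f ω), abs_nonneg (g ω)]

/-! ### The clamped process and its measurability -/

private def projI (u : ℝ) : ℝ := max 0 (min u 1)

private lemma projI_mem (u : ℝ) : projI u ∈ Icc (0:ℝ) 1 := by
  constructor
  · exact le_max_left _ _
  · rw [projI]
    exact max_le (by norm_num) (min_le_right _ _)

private lemma projI_eq {u : ℝ} (hu : u ∈ Icc (0:ℝ) 1) : projI u = u := by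
  rw [projI, min_eq_left hu.2, max_eq_right hu.1]

private lemma projI_cont : Continuous projI :=
  continuous_const.max (continuous_id.min continuous_const)

private def psiW {Ω : Type*} (W : ℝ → Ω → ℝ) (a b u : ℝ) (ω : Ω) : ℝ :=
  (u - a) * (W (projI b) ω - W (projI u) ω) - (b - u) * (W (projI u) ω - W (projI a) ω)

private lemma psiW_eq {Ω : Type*} {W : ℝ → Ω → ℝ} {a b u : ℝ}
    (ha : a ∈ Icc (0:ℝ) 1) (hb : b ∈ Icc (0:ℝ) 1) (hu : u ∈ Icc (0:ℝ) 1) (ω : Ω) :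
    psiW W a b u ω
      = (u - a) * (W b ω - W u ω) - (b - u) * (W u ω - W a ω) := by
  rw [psiW, projI_eq ha, projI_eq hb, projI_eq hu]

private lemma Vjoint {Ω : Type*} [m' : MeasurableSpace Ω] {W : ℝ → Ω → ℝ}
    (hmeas : ∀ x ∈ Icc (0:ℝ) 1, Measurable (W x))
    (hcont : ∀ ω, ContinuousOn (fun u => W u ω) (Icc 0 1)) :
    Measurable (Function.uncurry fun (u : ℝ) (ω : Ω) => W (projI u) ω) :=
  measurable_uncurry_of_continuous_of_measurable
    (fun ω => (hcont ω).comp_continuous projI_cont projI_mem)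
    (fun u => hmeas _ (projI_mem u))

private lemma psiW_meas_pair {Ω : Type*} [m' : MeasurableSpace Ω] {W : ℝ → Ω → ℝ}
    (hmeas : ∀ x ∈ Icc (0:ℝ) 1, Measurable (W x))
    (hcont : ∀ ω, ContinuousOn (fun u => W u ω) (Icc 0 1)) (a b : ℝ) :
    Measurable (fun q : Ω × ℝ => psiW W a b q.2 q.1) := by
  have hj := Vjoint hmeas hcont
  have hVu : Measurable fun q : Ω × ℝ => W (projI q.2) q.1 :=
    hj.comp (measurable_snd.prodMk measurable_fst)
  have hVa : Measurable fun q : Ω × ℝ => W (projI a) q.1 :=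
    (hmeas _ (projI_mem a)).comp measurable_fst
  have hVb : Measurable fun q : Ω × ℝ => W (projI b) q.1 :=
    (hmeas _ (projI_mem b)).comp measurable_fst
  simp only [psiW]
  exact (((measurable_snd.sub measurable_const).mul (hVb.sub hVu)).sub
    ((measurable_const.sub measurable_snd).mul (hVu.sub hVa)))

private lemma intpsi_stronglyMeasurable {Ω : Type*} [m' : MeasurableSpace Ω] {W : ℝ → Ω → ℝ}
    (hmeas : ∀ x ∈ Icc (0:ℝ) 1, Measurable (W x))
    (hcont : ∀ ω, ContinuousOn (fun u => W u ω) (Icc 0 1)) (a b : ℝ) :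
    StronglyMeasurable (fun ω : Ω => ∫ u in Ioc a b, psiW W a b u ω) :=
  ((psiW_meas_pair hmeas hcont a b).stronglyMeasurable).integral_prod_right'

private lemma psiWmul_meas {Ω : Type*} [m' : MeasurableSpace Ω] {W : ℝ → Ω → ℝ}
    (hmeas : ∀ x ∈ Icc (0:ℝ) 1, Measurable (W x))
    (hcont : ∀ ω, ContinuousOn (fun u => W u ω) (Icc 0 1)) (a b c d : ℝ) :
    Measurable (fun q : (ℝ × ℝ) × Ω => psiW W a b q.1.1 q.2 * psiW W c d q.1.2 q.2) := by
  have h1 : Measurable (fun q : (ℝ × ℝ) × Ω => psiW W a b q.1.1 q.2) :=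
    (psiW_meas_pair hmeas hcont a b).comp
      (measurable_snd.prodMk (measurable_fst.comp measurable_fst))
  have h2 : Measurable (fun q : (ℝ × ℝ) × Ω => psiW W c d q.1.2 q.2) :=
    (psiW_meas_pair hmeas hcont c d).comp
      (measurable_snd.prodMk (measurable_snd.comp measurable_fst))
  exact h1.mul h2

/-! ### Second-moment lemmas for the FBM -/

private lemma fbm_memL2 {Ω : Type*} [MeasurableSpace Ω] {P : Measure Ω} {H : ℝ}
    {W : ℝ → Ω → ℝ} (hW : IsFBM P H W) :
    ∀ x ∈ Icc (0:ℝ) 1, MemLp (W x) 2 P := by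
  intro x hx
  obtain ⟨v, hv⟩ := hW.2.1 1 (fun _ => 1) (fun _ => x) (fun _ => hx)
  have he : (fun ω => ∑ _i : Fin 1, (1:ℝ) * W x ω) = W x := by funext ω; simp
  rw [he] at hv
  exact memL2_of_gaussian (hW.1 x hx) hv

private lemma psiW_memL2 {Ω : Type*} [MeasurableSpace Ω] {P : Measure Ω} {H : ℝ}
    {W : ℝ → Ω → ℝ} (hW : IsFBM P H W) (a b u : ℝ) :
    MemLp (fun ω => psiW W a b u ω) 2 P := by
  have h1 := fbm_memL2 hW _ (projI_mem b)
  have h2 := fbm_memL2 hW _ (projI_mem u)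
  have h3 := fbm_memL2 hW _ (projI_mem a)
  simp only [psiW]
  exact ((h1.sub h2).const_mul _).sub ((h2.sub h3).const_mul _)

private lemma cov_inc {Ω : Type*} [MeasurableSpace Ω] {P : Measure Ω} {H : ℝ}
    {W : ℝ → Ω → ℝ} (hW : IsFBM P H W) {a b c d : ℝ}
    (ha : a ∈ Icc (0:ℝ) 1) (hb : b ∈ Icc (0:ℝ) 1) (hc : c ∈ Icc (0:ℝ) 1)
    (hd : d ∈ Icc (0:ℝ) 1) :
    ∫ ω, (W b ω - W a ω) * (W d ω - W c ω) ∂P = fbmCov H a b c d := by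
  have m2 := fbm_memL2 hW
  have ibd := memL2_mul_integrable (m2 b hb) (m2 d hd)
  have ibc := memL2_mul_integrable (m2 b hb) (m2 c hc)
  have iad := memL2_mul_integrable (m2 a ha) (m2 d hd)
  have iac := memL2_mul_integrable (m2 a ha) (m2 c hc)
  have he : (fun ω => (W b ω - W a ω) * (W d ω - W c ω))
      = fun ω => (W b ω * W d ω - W b ω * W c ω) - (W a ω * W d ω - W a ω * W c ω) := by
    funext ω; ring
  have iA : Integrable (fun ω => W b ω * W d ω - W b ω * W c ω) P := ibd.sub ibc
  have iB : Integrable (fun ω => W a ω * W d ω - W a ω * W c ω) P := iad.sub iac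
  rw [he, integral_sub iA iB, integral_sub ibd ibc,
    integral_sub iad iac, hW.2.2 b hb d hd, hW.2.2 b hb c hc, hW.2.2 a ha d hd,
    hW.2.2 a ha c hc, fbmCov]
  ring

/-! ### The main theorem -/

set_option maxHeartbeats 1000000 in
/-- For two independent fractional Brownian motions `W¹, W²` with Hurst parameter
`H ∈ (0,1/2)` and continuous sample paths, and `0 ≤ s' < t' ≤ s < t ≤ 1`:
`|E(Y_{s',t'} Y_{s,t})| ≤ ρ_H(s',t';s,t)²`. -/
theorem Yproc_cov_bound {Ω : Type*} [MeasurableSpace Ω]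
    (P : Measure Ω) [IsProbabilityMeasure P]
    (H : ℝ) (hH : H ∈ Ioo (0 : ℝ) (1 / 2)) (W1 W2 : ℝ → Ω → ℝ)
    (hW1 : IsFBM P H W1) (hW2 : IsFBM P H W2)
    (hcont1 : ∀ ω, ContinuousOn (fun u => W1 u ω) (Icc 0 1))
    (hcont2 : ∀ ω, ContinuousOn (fun u => W2 u ω) (Icc 0 1))
    (hindep : Indep
      (⨆ t ∈ Icc (0 : ℝ) 1, MeasurableSpace.comap (W1 t) inferInstance)
      (⨆ t ∈ Icc (0 : ℝ) 1, MeasurableSpace.comap (W2 t) inferInstance) P)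
    (s' t' s t : ℝ) (h0 : 0 ≤ s') (h1 : s' < t') (h2 : t' ≤ s) (h3 : s < t) (h4 : t ≤ 1) :
    |∫ ω, Yproc W1 W2 s' t' ω * Yproc W1 W2 s t ω ∂P| ≤ (fbmCov H s' t' s t) ^ 2 := by
  obtain ⟨hH0, hH12⟩ := hH
  have hle1 : 2 * H ≤ 1 := by linarith
  have hs'I : s' ∈ Icc (0:ℝ) 1 := ⟨h0, by linarith⟩
  have ht'I : t' ∈ Icc (0:ℝ) 1 := ⟨by linarith, by linarith⟩
  have hsI : s ∈ Icc (0:ℝ) 1 := ⟨by linarith, by linarith⟩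
  have htI : t ∈ Icc (0:ℝ) 1 := ⟨by linarith, h4⟩
  have hsub' : Icc s' t' ⊆ Icc (0:ℝ) 1 := fun u hu => ⟨by linarith [hu.1], by linarith [hu.2]⟩
  have hsub : Icc s t ⊆ Icc (0:ℝ) 1 := fun v hv => ⟨by linarith [hv.1], by linarith [hv.2]⟩
  have hρ : fbmCov H s' t' s t ≤ 0 := fbmCov_nonpos hH0 hle1 h1.le h2 h3.le
  have m1 := fbm_memL2 hW1
  -- the general mixed-moment formula for the weighted bridge integrands
  have EpsiG : ∀ a b c d u v : ℝ, a ∈ Icc (0:ℝ) 1 → b ∈ Icc (0:ℝ) 1 → c ∈ Icc (0:ℝ) 1 →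
      d ∈ Icc (0:ℝ) 1 → u ∈ Icc (0:ℝ) 1 → v ∈ Icc (0:ℝ) 1 →
      ∫ ω, psiW W1 a b u ω * psiW W1 c d v ω ∂P
        = (u - a) * (v - c) * fbmCov H u b v d
          - (u - a) * (d - v) * fbmCov H u b c v
          - (b - u) * (v - c) * fbmCov H a u v d
          + (b - u) * (d - v) * fbmCov H a u c v := by
    intro a b c d u v ha hb hc hd hu hv
    have e1 : MemLp (fun ω => W1 b ω - W1 u ω) 2 P := (m1 b hb).sub (m1 u hu)
    have e2 : MemLp (fun ω => W1 u ω - W1 a ω) 2 P := (m1 u hu).sub (m1 a ha)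
    have e3 : MemLp (fun ω => W1 d ω - W1 v ω) 2 P := (m1 d hd).sub (m1 v hv)
    have e4 : MemLp (fun ω => W1 v ω - W1 c ω) 2 P := (m1 v hv).sub (m1 c hc)
    have I1 := memL2_mul_integrable e1 e3
    have I2 := memL2_mul_integrable e1 e4
    have I3 := memL2_mul_integrable e2 e3
    have I4 := memL2_mul_integrable e2 e4
    have he : (fun ω => psiW W1 a b u ω * psiW W1 c d v ω)
        = fun ω => ((u - a) * (v - c)) * ((W1 b ω - W1 u ω) * (W1 d ω - W1 v ω))
          - ((u - a) * (d - v)) * ((W1 b ω - W1 u ω) * (W1 v ω - W1 c ω))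
          - ((b - u) * (v - c)) * ((W1 u ω - W1 a ω) * (W1 d ω - W1 v ω))
          + ((b - u) * (d - v)) * ((W1 u ω - W1 a ω) * (W1 v ω - W1 c ω)) := by
      funext ω; rw [psiW_eq ha hb hu ω, psiW_eq hc hd hv ω]; ring
    have J1 : Integrable (fun ω =>
        ((u - a) * (v - c)) * ((W1 b ω - W1 u ω) * (W1 d ω - W1 v ω))) P := I1.const_mul _
    have J2 : Integrable (fun ω =>
        ((u - a) * (d - v)) * ((W1 b ω - W1 u ω) * (W1 v ω - W1 c ω))) P := I2.const_mul _
    have J3 : Integrable (fun ω =>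
        ((b - u) * (v - c)) * ((W1 u ω - W1 a ω) * (W1 d ω - W1 v ω))) P := I3.const_mul _
    have J4 : Integrable (fun ω =>
        ((b - u) * (d - v)) * ((W1 u ω - W1 a ω) * (W1 v ω - W1 c ω))) P := I4.const_mul _
    have J12 : Integrable (fun ω =>
        ((u - a) * (v - c)) * ((W1 b ω - W1 u ω) * (W1 d ω - W1 v ω))
          - ((u - a) * (d - v)) * ((W1 b ω - W1 u ω) * (W1 v ω - W1 c ω))) P := J1.sub J2
    have J123 : Integrable (fun ω =>
        ((u - a) * (v - c)) * ((W1 b ω - W1 u ω) * (W1 d ω - W1 v ω))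
          - ((u - a) * (d - v)) * ((W1 b ω - W1 u ω) * (W1 v ω - W1 c ω))
          - ((b - u) * (v - c)) * ((W1 u ω - W1 a ω) * (W1 d ω - W1 v ω))) P := J12.sub J3
    rw [he, integral_add J123 J4, integral_sub J12 J3, integral_sub J1 J2,
      integral_const_mul, integral_const_mul, integral_const_mul, integral_const_mul,
      cov_inc hW1 hu hb hv hd, cov_inc hW1 hu hb hc hv,
      cov_inc hW1 ha hu hv hd, cov_inc hW1 ha hu hc hv]
  -- L8 : pointwise bound on the mixed moment by the increment covariance
  have Ebound : ∀ u ∈ Icc s' t', ∀ v ∈ Icc s t,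
      |∫ ω, psiW W1 s' t' u ω * psiW W1 s t v ω ∂P|
        ≤ (t' - s') * (t - s) * (-fbmCov H s' t' s t) := by
    intro u hu v hv
    rw [EpsiG s' t' s t u v hs'I ht'I hsI htI (hsub' hu) (hsub hv)]
    have k1 := fbmCov_abs_le hH0 hle1 hu.1 hu.2 le_rfl h2 hv.1 hv.2 le_rfl
    have k2 := fbmCov_abs_le hH0 hle1 hu.1 hu.2 le_rfl h2 le_rfl hv.1 hv.2
    have k3 := fbmCov_abs_le hH0 hle1 le_rfl hu.1 hu.2 h2 hv.1 hv.2 le_rfl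
    have k4 := fbmCov_abs_le hH0 hle1 le_rfl hu.1 hu.2 h2 le_rfl hv.1 hv.2
    have w1n : (0:ℝ) ≤ (u - s') * (v - s) :=
      mul_nonneg (by linarith [hu.1]) (by linarith [hv.1])
    have w2n : (0:ℝ) ≤ (u - s') * (t - v) :=
      mul_nonneg (by linarith [hu.1]) (by linarith [hv.2])
    have w3n : (0:ℝ) ≤ (t' - u) * (v - s) :=
      mul_nonneg (by linarith [hu.2]) (by linarith [hv.1])
    have w4n : (0:ℝ) ≤ (t' - u) * (t - v) :=
      mul_nonneg (by linarith [hu.2]) (by linarith [hv.2])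
    obtain ⟨k1l, k1u⟩ := abs_le.mp k1
    obtain ⟨k2l, k2u⟩ := abs_le.mp k2
    obtain ⟨k3l, k3u⟩ := abs_le.mp k3
    obtain ⟨k4l, k4u⟩ := abs_le.mp k4
    have p1 := mul_le_mul_of_nonneg_left k1u w1n
    have p1' := mul_le_mul_of_nonneg_left k1l w1n
    have p2 := mul_le_mul_of_nonneg_left k2u w2n
    have p2' := mul_le_mul_of_nonneg_left k2l w2n
    have p3 := mul_le_mul_of_nonneg_left k3u w3n
    have p3' := mul_le_mul_of_nonneg_left k3l w3n
    have p4 := mul_le_mul_of_nonneg_left k4u w4n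
    have p4' := mul_le_mul_of_nonneg_left k4l w4n
    have hsum : (u - s') * (v - s) + (u - s') * (t - v) + (t' - u) * (v - s)
        + (t' - u) * (t - v) = (t' - s') * (t - s) := by ring
    rw [abs_le]
    constructor <;> linarith [p1, p1', p2, p2', p3, p3', p4, p4']
  -- L9 : uniform bound on the absolute mixed second moment
  have Hsq : ∀ a b u : ℝ, a ∈ Icc (0:ℝ) 1 → b ∈ Icc (0:ℝ) 1 → u ∈ Icc (0:ℝ) 1 →
      ∫ ω, psiW W1 a b u ω * psiW W1 a b u ω ∂P ≤ 8 := by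
    intro a b u ha hb hu
    rw [EpsiG a b a b u u ha hb ha hb hu hu]
    have hco : ∀ x y : ℝ, x ∈ Icc (0:ℝ) 1 → y ∈ Icc (0:ℝ) 1 → |x - y| ≤ 1 := by
      intro x y hx hy
      rw [abs_le]
      constructor <;> linarith [hx.1, hx.2, hy.1, hy.2]
    have c1 := hco u a hu ha
    have c2 := hco b u hb hu
    have k1 := fbmCov_abs_le_two hH0 hu hb hu hb
    have k2 := fbmCov_abs_le_two hH0 hu hb ha hu
    have k3 := fbmCov_abs_le_two hH0 ha hu hu hb
    have k4 := fbmCov_abs_le_two hH0 ha hu ha hu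
    have tb : ∀ x y K : ℝ, |x| ≤ 1 → |y| ≤ 1 → |K| ≤ 2 → |x * y * K| ≤ 2 := by
      intro x y K hx hy hK
      rw [abs_mul, abs_mul]
      have hxy : |x| * |y| ≤ 1 := mul_le_one₀ hx (abs_nonneg _) hy
      calc |x| * |y| * |K| ≤ 1 * |K| := mul_le_mul_of_nonneg_right hxy (abs_nonneg _)
        _ = |K| := one_mul _
        _ ≤ 2 := hK
    have t1 : |(u - a) * (u - a) * fbmCov H u b u b| ≤ 2 := tb _ _ _ c1 c1 k1
    have t2 : |(u - a) * (b - u) * fbmCov H u b a u| ≤ 2 := tb _ _ _ c1 c2 k2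
    have t3 : |(b - u) * (u - a) * fbmCov H a u u b| ≤ 2 := tb _ _ _ c2 c1 k3
    have t4 : |(b - u) * (b - u) * fbmCov H a u a u| ≤ 2 := tb _ _ _ c2 c2 k4
    calc (u - a) * (u - a) * fbmCov H u b u b
          - (u - a) * (b - u) * fbmCov H u b a u
          - (b - u) * (u - a) * fbmCov H a u u b
          + (b - u) * (b - u) * fbmCov H a u a u
        ≤ |(u - a) * (u - a) * fbmCov H u b u b|
          + |(u - a) * (b - u) * fbmCov H u b a u|
          + |(b - u) * (u - a) * fbmCov H a u u b|
          + |(b - u) * (b - u) * fbmCov H a u a u| := by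
          have a1 := le_abs_self ((u - a) * (u - a) * fbmCov H u b u b)
          have a2 := neg_abs_le ((u - a) * (b - u) * fbmCov H u b a u)
          have a3 := neg_abs_le ((b - u) * (u - a) * fbmCov H a u u b)
          have a4 := le_abs_self ((b - u) * (b - u) * fbmCov H a u a u)
          linarith
      _ ≤ 8 := by linarith
  -- product measure setup
  set μ2 : Measure (ℝ × ℝ) :=
    (volume.restrict (Ioc s' t')).prod (volume.restrict (Ioc s t)) with hμ2def
  have hΨmeas : Measurable
      (fun q : (ℝ × ℝ) × Ω => psiW W1 s' t' q.1.1 q.2 * psiW W1 s t q.1.2 q.2) :=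
    psiWmul_meas hW1.1 hcont1 s' t' s t
  have hΨaesm : AEStronglyMeasurable
      (fun q : (ℝ × ℝ) × Ω => psiW W1 s' t' q.1.1 q.2 * psiW W1 s t q.1.2 q.2)
      (μ2.prod P) := hΨmeas.aestronglyMeasurable
  have hΨint : Integrable
      (fun q : (ℝ × ℝ) × Ω => psiW W1 s' t' q.1.1 q.2 * psiW W1 s t q.1.2 q.2)
      (μ2.prod P) := by
    refine (integrable_prod_iff hΨaesm).mpr ⟨?_, ?_⟩
    · exact Filter.Eventually.of_forall fun p =>
        memL2_mul_integrable (psiW_memL2 hW1 s' t' p.1) (psiW_memL2 hW1 s t p.2)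
    · refine Integrable.mono' (integrable_const (8:ℝ)) ?_ ?_
      · exact (hΨaesm.norm).integral_prod_right'
      · have hμ2r : μ2 = (volume.prod volume).restrict ((Ioc s' t') ×ˢ (Ioc s t)) := by
          rw [hμ2def, Measure.prod_restrict]
        rw [hμ2r]
        filter_upwards [ae_restrict_mem (measurableSet_Ioc.prod measurableSet_Ioc)] with p hp
        have huI : p.1 ∈ Icc (0:ℝ) 1 := hsub' ⟨hp.1.1.le, hp.1.2⟩
        have hvI : p.2 ∈ Icc (0:ℝ) 1 := hsub ⟨hp.2.1.le, hp.2.2⟩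
        have i11 := memL2_mul_integrable (psiW_memL2 hW1 s' t' p.1) (psiW_memL2 hW1 s' t' p.1)
        have i22 := memL2_mul_integrable (psiW_memL2 hW1 s t p.2) (psiW_memL2 hW1 s t p.2)
        have i12 := memL2_mul_integrable (psiW_memL2 hW1 s' t' p.1) (psiW_memL2 hW1 s t p.2)
        have habs : Integrable (fun ω => ‖psiW W1 s' t' p.1 ω * psiW W1 s t p.2 ω‖) P :=
          i12.norm
        have hmono : ∫ ω, ‖psiW W1 s' t' p.1 ω * psiW W1 s t p.2 ω‖ ∂P
            ≤ ∫ ω, (psiW W1 s' t' p.1 ω * psiW W1 s' t' p.1 ω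
                + psiW W1 s t p.2 ω * psiW W1 s t p.2 ω) / 2 ∂P := by
          apply integral_mono habs ((i11.add i22).div_const 2)
          intro ω
          show ‖psiW W1 s' t' p.1 ω * psiW W1 s t p.2 ω‖
            ≤ (psiW W1 s' t' p.1 ω * psiW W1 s' t' p.1 ω
                + psiW W1 s t p.2 ω * psiW W1 s t p.2 ω) / 2
          have hq1 := sq_nonneg (psiW W1 s' t' p.1 ω - psiW W1 s t p.2 ω)
          have hq2 := sq_nonneg (psiW W1 s' t' p.1 ω + psiW W1 s t p.2 ω)
          rw [Real.norm_eq_abs, abs_le]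
          constructor <;> nlinarith [hq1, hq2]
        have hval : ∫ ω, (psiW W1 s' t' p.1 ω * psiW W1 s' t' p.1 ω
            + psiW W1 s t p.2 ω * psiW W1 s t p.2 ω) / 2 ∂P
            = ((∫ ω, psiW W1 s' t' p.1 ω * psiW W1 s' t' p.1 ω ∂P)
              + ∫ ω, psiW W1 s t p.2 ω * psiW W1 s t p.2 ω ∂P) / 2 := by
          rw [integral_div, integral_add i11 i22]
        have b1 := Hsq s' t' p.1 hs'I ht'I huI
        have b2 := Hsq s t p.2 hsI htI hvI
        have hnn : 0 ≤ ∫ ω, ‖psiW W1 s' t' p.1 ω * psiW W1 s t p.2 ω‖ ∂P :=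
          integral_nonneg fun ω => norm_nonneg _
        rw [Real.norm_eq_abs, abs_of_nonneg hnn]
        calc ∫ ω, ‖psiW W1 s' t' p.1 ω * psiW W1 s t p.2 ω‖ ∂P
            ≤ _ := hmono
          _ ≤ 8 := by rw [hval]; linarith
  have hinner_int : Integrable
      (fun p : ℝ × ℝ => ∫ ω, psiW W1 s' t' p.1 ω * psiW W1 s t p.2 ω ∂P) μ2 :=
    hΨint.integral_prod_left
  have hswap : ∫ p, (∫ ω, psiW W1 s' t' p.1 ω * psiW W1 s t p.2 ω ∂P) ∂μ2
      = ∫ ω, (∫ p, psiW W1 s' t' p.1 ω * psiW W1 s t p.2 ω ∂μ2) ∂P :=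
    integral_integral_swap hΨint
  -- the first factor of the product of the two Y's
  set X : Ω → ℝ := fun ω =>
    (((t' - s') ^ 2)⁻¹ * ∫ u in Ioc s' t', psiW W1 s' t' u ω) *
      (((t - s) ^ 2)⁻¹ * ∫ v in Ioc s t, psiW W1 s t v ω) with hXdef
  set Y : Ω → ℝ := fun ω => (W2 t' ω - W2 s' ω) * (W2 t ω - W2 s ω) with hYdef
  have hXalt : X = fun ω => (((t' - s') ^ 2)⁻¹ * ((t - s) ^ 2)⁻¹)
      * ∫ p, psiW W1 s' t' p.1 ω * psiW W1 s t p.2 ω ∂μ2 := by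
    funext ω
    rw [hXdef]
    have := integral_prod_mul (μ := volume.restrict (Ioc s' t'))
      (ν := volume.restrict (Ioc s t)) (f := fun u => psiW W1 s' t' u ω)
      (g := fun v => psiW W1 s t v ω)
    rw [hμ2def, this]
    ring
  have hEX : ∫ ω, X ω ∂P = (((t' - s') ^ 2)⁻¹ * ((t - s) ^ 2)⁻¹)
      * ∫ p, (∫ ω, psiW W1 s' t' p.1 ω * psiW W1 s t p.2 ω ∂P) ∂μ2 := by
    rw [hXalt, integral_const_mul, hswap]
  have ht's' : (0:ℝ) < t' - s' := by linarith
  have hts : (0:ℝ) < t - s := by linarith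
  -- bound on E X
  have hEXbound : |∫ ω, X ω ∂P| ≤ -fbmCov H s' t' s t := by
    rw [hEX, abs_mul]
    have hc1 : (0:ℝ) < ((t' - s') ^ 2)⁻¹ := by positivity
    have hc2 : (0:ℝ) < ((t - s) ^ 2)⁻¹ := by positivity
    have hcabs : |((t' - s') ^ 2)⁻¹ * ((t - s) ^ 2)⁻¹|
        = ((t' - s') ^ 2)⁻¹ * ((t - s) ^ 2)⁻¹ := abs_of_pos (by positivity)
    rw [hcabs]
    have habs : |∫ p, (∫ ω, psiW W1 s' t' p.1 ω * psiW W1 s t p.2 ω ∂P) ∂μ2|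
        ≤ ∫ p, |∫ ω, psiW W1 s' t' p.1 ω * psiW W1 s t p.2 ω ∂P| ∂μ2 := by
      have := norm_integral_le_integral_norm
        (μ := μ2) (f := fun p => ∫ ω, psiW W1 s' t' p.1 ω * psiW W1 s t p.2 ω ∂P)
      simpa [Real.norm_eq_abs] using this
    have hmono : ∫ p, |∫ ω, psiW W1 s' t' p.1 ω * psiW W1 s t p.2 ω ∂P| ∂μ2
        ≤ ∫ _p, ((t' - s') * (t - s) * (-fbmCov H s' t' s t)) ∂μ2 := by
      apply integral_mono_ae hinner_int.abs (integrable_const _)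
      have hμ2r : μ2 = (volume.prod volume).restrict ((Ioc s' t') ×ˢ (Ioc s t)) := by
        rw [hμ2def, Measure.prod_restrict]
      rw [hμ2r]
      filter_upwards [ae_restrict_mem (measurableSet_Ioc.prod measurableSet_Ioc)] with p hp
      exact Ebound p.1 ⟨hp.1.1.le, hp.1.2⟩ p.2 ⟨hp.2.1.le, hp.2.2⟩
    have hconst : ∫ _p, ((t' - s') * (t - s) * (-fbmCov H s' t' s t)) ∂μ2
        = ((t' - s') * (t - s)) * ((t' - s') * (t - s) * (-fbmCov H s' t' s t)) := by
      rw [integral_const]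
      have : μ2 univ = ENNReal.ofReal (t' - s') * ENNReal.ofReal (t - s) := by
        rw [hμ2def, ← univ_prod_univ, Measure.prod_prod, Measure.restrict_apply_univ,
          Measure.restrict_apply_univ, Real.volume_Ioc, Real.volume_Ioc]
      rw [measureReal_def, this, ENNReal.toReal_mul, ENNReal.toReal_ofReal ht's'.le,
        ENNReal.toReal_ofReal hts.le, smul_eq_mul]
    have hkey : ((t' - s') ^ 2)⁻¹ * ((t - s) ^ 2)⁻¹
        * (((t' - s') * (t - s)) * ((t' - s') * (t - s) * (-fbmCov H s' t' s t)))
        = -fbmCov H s' t' s t := by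
      field_simp
    calc ((t' - s') ^ 2)⁻¹ * ((t - s) ^ 2)⁻¹
          * |∫ p, (∫ ω, psiW W1 s' t' p.1 ω * psiW W1 s t p.2 ω ∂P) ∂μ2|
        ≤ ((t' - s') ^ 2)⁻¹ * ((t - s) ^ 2)⁻¹
          * (((t' - s') * (t - s)) * ((t' - s') * (t - s) * (-fbmCov H s' t' s t))) := by
          apply mul_le_mul_of_nonneg_left _ (by positivity)
          calc |∫ p, (∫ ω, psiW W1 s' t' p.1 ω * psiW W1 s t p.2 ω ∂P) ∂μ2|
              ≤ ∫ p, |∫ ω, psiW W1 s' t' p.1 ω * psiW W1 s t p.2 ω ∂P| ∂μ2 := habs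
            _ ≤ ∫ _p, ((t' - s') * (t - s) * (-fbmCov H s' t' s t)) ∂μ2 := hmono
            _ = ((t' - s') * (t - s)) * ((t' - s') * (t - s) * (-fbmCov H s' t' s t)) := hconst
      _ = -fbmCov H s' t' s t := hkey
  -- sigma algebras and independence
  have hW1G : ∀ x ∈ Icc (0:ℝ) 1,
      Measurable[⨆ r ∈ Icc (0 : ℝ) 1, MeasurableSpace.comap (W1 r) inferInstance] (W1 x) := by
    intro x hx
    rw [measurable_iff_comap_le]
    exact le_biSup (fun r => MeasurableSpace.comap (W1 r) inferInstance) hx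
  have hW2G : ∀ x ∈ Icc (0:ℝ) 1,
      Measurable[⨆ r ∈ Icc (0 : ℝ) 1, MeasurableSpace.comap (W2 r) inferInstance] (W2 x) := by
    intro x hx
    rw [measurable_iff_comap_le]
    exact le_biSup (fun r => MeasurableSpace.comap (W2 r) inferInstance) hx
  have hXmeasG : Measurable[⨆ r ∈ Icc (0 : ℝ) 1,
      MeasurableSpace.comap (W1 r) inferInstance] X := by
    have hA := (intpsi_stronglyMeasurable
      (m' := ⨆ r ∈ Icc (0 : ℝ) 1, MeasurableSpace.comap (W1 r) inferInstance)
      hW1G hcont1 s' t').measurable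
    have hB := (intpsi_stronglyMeasurable
      (m' := ⨆ r ∈ Icc (0 : ℝ) 1, MeasurableSpace.comap (W1 r) inferInstance)
      hW1G hcont1 s t).measurable
    rw [hXdef]
    exact (hA.const_mul _).mul (hB.const_mul _)
  have hYmeasG : Measurable[⨆ r ∈ Icc (0 : ℝ) 1,
      MeasurableSpace.comap (W2 r) inferInstance] Y := by
    rw [hYdef]
    exact ((hW2G t' ht'I).sub (hW2G s' hs'I)).mul ((hW2G t htI).sub (hW2G s hsI))
  have hIndXY : IndepFun X Y P := by
    rw [IndepFun_iff_Indep]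
    exact indep_of_indep_of_le_right
      (indep_of_indep_of_le_left hindep (measurable_iff_comap_le.mp hXmeasG))
      (measurable_iff_comap_le.mp hYmeasG)
  have hG1le : (⨆ r ∈ Icc (0 : ℝ) 1, MeasurableSpace.comap (W1 r) inferInstance)
      ≤ ‹MeasurableSpace Ω› := iSup₂_le fun x hx => measurable_iff_comap_le.mp (hW1.1 x hx)
  have hG2le : (⨆ r ∈ Icc (0 : ℝ) 1, MeasurableSpace.comap (W2 r) inferInstance)
      ≤ ‹MeasurableSpace Ω› := iSup₂_le fun x hx => measurable_iff_comap_le.mp (hW2.1 x hx)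
  have hXaesm : AEStronglyMeasurable X P :=
    (hXmeasG.mono hG1le le_rfl).aestronglyMeasurable
  have hYaesm : AEStronglyMeasurable Y P :=
    (hYmeasG.mono hG2le le_rfl).aestronglyMeasurable
  -- identification of the integrand
  have hstep0 : (fun ω => Yproc W1 W2 s' t' ω * Yproc W1 W2 s t ω) = fun ω => (X * Y) ω := by
    funext ω
    have e1 : (∫ u in s'..t',
        ((u - s') * (W1 t' ω - W1 u ω) - (t' - u) * (W1 u ω - W1 s' ω)))
          = ∫ u in Ioc s' t', psiW W1 s' t' u ω := by
      rw [intervalIntegral.integral_of_le h1.le]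
      apply setIntegral_congr_fun measurableSet_Ioc
      intro u hu
      exact (psiW_eq hs'I ht'I (hsub' ⟨hu.1.le, hu.2⟩) ω).symm
    have e2 : (∫ v in s..t,
        ((v - s) * (W1 t ω - W1 v ω) - (t - v) * (W1 v ω - W1 s ω)))
          = ∫ v in Ioc s t, psiW W1 s t v ω := by
      rw [intervalIntegral.integral_of_le h3.le]
      apply setIntegral_congr_fun measurableSet_Ioc
      intro v hv
      exact (psiW_eq hsI htI (hsub ⟨hv.1.le, hv.2⟩) ω).symm
    rw [Yproc, Yproc, e1, e2, Pi.mul_apply, hXdef, hYdef]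
    ring
  have hEY : ∫ ω, Y ω ∂P = fbmCov H s' t' s t := by
    rw [hYdef]
    exact cov_inc hW2 hs'I ht'I hsI htI
  -- conclusion
  rw [hstep0, hIndXY.integral_mul_eq_mul_integral hXaesm hYaesm, abs_mul, hEY]
  have hρa : |fbmCov H s' t' s t| = -fbmCov H s' t' s t := abs_of_nonpos hρ
  rw [hρa]
  nlinarith [hEXbound, abs_nonneg (∫ ω, X ω ∂P), hρ]
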